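/- Every triangulation of a closed surface has exactly one root: there is a unique triangulation R obtainable from T by a sequence of inverse T-moves such that no inverse T-move can be applied to R. -/
import Mathlib


namespace Tri

/-- A (pure 2-dimensional) simplicial complex, given by its set of triangles
(each triangle is a 3-element finset of vertex labels). -/
abbrev Complex := Finset (Finset ℕ)

/-- The vertices of a complex. -/
def vertices (K : Complex) : Finset ℕ := K.biUnion id

/-- The edges of a complex: 2-element subsets of triangles. -/
def edges (K : Complex) : Finset (Finset ℕ) := K.biUnion fun t => t.powersetCard 2

/-- The valence of a vertex: the number of triangles containing it. -/
def valence (K : Complex) (v : ℕ) : ℕ := (K.filter (fun t => v ∈ t)).card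

/-- The maximal vertex-valence of a complex. -/
def mv (K : Complex) : ℕ := (vertices K).sup (valence K)

/-- Euler characteristic V - E + T. -/
def eulerChar (K : Complex) : ℤ :=
  ((vertices K).card : ℤ) - (edges K).card + K.card

/-- Two triangles of `K` both containing `v` and sharing an edge. -/
def adjAt (K : Complex) (v : ℕ) (t₁ t₂ : Finset ℕ) : Prop :=
  t₁ ∈ K ∧ t₂ ∈ K ∧ v ∈ t₁ ∧ v ∈ t₂ ∧ (t₁ ∩ t₂).card = 2

/-- Two triangles of `K` sharing an edge. -/
def adj (K : Complex) (t₁ t₂ : Finset ℕ) : Prop :=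
  t₁ ∈ K ∧ t₂ ∈ K ∧ (t₁ ∩ t₂).card = 2

/-- A triangulation of a connected compact surface, possibly with boundary:
every triangle has 3 vertices, every edge lies in at most two triangles,
the triangles around every vertex are connected via edges through that vertex
(so every vertex link is a path or a circle), and the complex is connected. -/
structure IsSurface (K : Complex) : Prop where
  nonempty : K.Nonempty
  card3 : ∀ t ∈ K, t.card = 3
  edge_le : ∀ e ∈ edges K, (K.filter (fun t => e ⊆ t)).card ≤ 2
  link_conn : ∀ v, ∀ t₁ ∈ K, ∀ t₂ ∈ K, v ∈ t₁ → v ∈ t₂ →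
    Relation.ReflTransGen (adjAt K v) t₁ t₂
  conn : ∀ t₁ ∈ K, ∀ t₂ ∈ K, Relation.ReflTransGen (adj K) t₁ t₂

/-- A triangulation of a closed (connected compact) surface: every edge lies
in exactly two triangles. -/
def IsClosedSurface (K : Complex) : Prop :=
  IsSurface K ∧ ∀ e ∈ edges K, (K.filter (fun t => e ⊆ t)).card = 2

/-- Boundary edges: edges lying in exactly one triangle. -/
def bdryEdges (K : Complex) : Finset (Finset ℕ) :=
  (edges K).filter (fun e => (K.filter (fun t => e ⊆ t)).card = 1)

/-- Boundary vertices. -/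
def bdryVertices (K : Complex) : Finset ℕ := (bdryEdges K).biUnion id

/-- Interior vertices. -/
def intVertices (K : Complex) : Finset ℕ := vertices K \ bdryVertices K

/-- A triangulated disc: a connected compact surface with nonempty boundary and
Euler characteristic 1. -/
def IsDisc (K : Complex) : Prop :=
  IsSurface K ∧ eulerChar K = 1 ∧ (bdryEdges K).Nonempty

/-- Two edges sharing a vertex. -/
def edgeAdj (E : Complex) (e₁ e₂ : Finset ℕ) : Prop :=
  e₁ ∈ E ∧ e₂ ∈ E ∧ (e₁ ∩ e₂).Nonempty

/-- A set of edges forming a triangulated circle. -/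
def IsCircle (E : Complex) : Prop :=
  E.Nonempty ∧ (∀ e ∈ E, e.card = 2) ∧
  (∀ v ∈ E.biUnion id, (E.filter (fun e => v ∈ e)).card = 2) ∧
  ∀ e₁ ∈ E, ∀ e₂ ∈ E, Relation.ReflTransGen (edgeAdj E) e₁ e₂

/-- Simplicial isomorphism (re-labeling). -/
def Iso (K₁ K₂ : Complex) : Prop :=
  ∃ f : ℕ → ℕ, Set.InjOn f (vertices K₁) ∧ K₁.image (Finset.image f) = K₂

/-- The boundary of the tetrahedron. -/
def tetra : Complex := {{1,2,3},{1,2,4},{1,3,4},{2,3,4}}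

/-- The boundary of the octahedron. -/
def octa : Complex := {{1,2,3},{1,2,4},{1,3,5},{1,4,5},{2,3,6},{2,4,6},{3,5,6},{4,5,6}}

/-- The vertices of the link of a vertex. -/
def linkV (K : Complex) (v : ℕ) : Finset ℕ :=
  ((K.filter (fun t => v ∈ t)).biUnion id).erase v

/-- The result of the inverse T-move removing the vertex `v`. -/
def invT (K : Complex) (v : ℕ) : Complex :=
  insert (linkV K v) (K.filter (fun t => v ∉ t))

/-- `K'` is obtained from `K` by an inverse T-move: a 3-valent vertex whose
link does not bound a triangle is removed. -/
def InvTStep (K K' : Complex) : Prop :=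
  ∃ v, valence K v = 3 ∧ linkV K v ∉ K ∧ K' = invT K v

/-- A root: a closed triangulated surface admitting no inverse T-move. -/
def IsRoot (K : Complex) : Prop := IsClosedSurface K ∧ ∀ K', ¬ InvTStep K K'

/-- `R` is a root of `K`: obtained from `K` by inverse T-moves, with no
further inverse T-move applicable. -/
def IsRootOf (R K : Complex) : Prop :=
  Relation.ReflTransGen InvTStep K R ∧ ∀ R', ¬ InvTStep R R'

/-- The directed edges of an ordered triangle. -/
def dedges (p : ℕ × ℕ × ℕ) : Finset (ℕ × ℕ) := {(p.1, p.2.1), (p.2.1, p.2.2), (p.2.2, p.1)}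

/-- Orientability: a coherent choice of cyclic orders on the triangles,
i.e. no directed edge is shared by two distinct triangles. -/
def Orientable (K : Complex) : Prop :=
  ∃ o : Finset ℕ → ℕ × ℕ × ℕ,
    (∀ t ∈ K, ({(o t).1, (o t).2.1, (o t).2.2} : Finset ℕ) = t) ∧
    ∀ t₁ ∈ K, ∀ t₂ ∈ K, t₁ ≠ t₂ → ∀ p ∈ dedges (o t₁), p ∉ dedges (o t₂)

/-- Two closed triangulated surfaces triangulate the same surface iff they
have the same Euler characteristic and the same orientability. -/
def SameSurface (K₁ K₂ : Complex) : Prop :=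
  eulerChar K₁ = eulerChar K₂ ∧ (Orientable K₁ ↔ Orientable K₂)

/-- The intersection of two subcomplexes is a triangulated circle or empty. -/
def CircleInter (A B : Complex) : Prop :=
  (IsCircle (edges A ∩ edges B) ∨ edges A ∩ edges B = ∅) ∧
  vertices A ∩ vertices B = (edges A ∩ edges B).biUnion id

/-- A decomposition `(G, D, Ds)` of a closed triangulated surface `K`. -/
structure IsDecomp (K G D : Complex) (Ds : Finset Complex) : Prop where
  closed : IsClosedSurface K
  subG : G ⊆ K
  subD : D ⊆ K
  subDs : ∀ Di ∈ Ds, Di ⊆ K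
  surfG : IsSurface G
  discD : IsDisc D
  discDs : ∀ Di ∈ Ds, IsDisc Di
  maxv : ∃ v ∈ intVertices D, valence K v = mv K
  cover : G ∪ D ∪ Ds.sup id = K
  disjGD : Disjoint G D
  disjGDs : ∀ Di ∈ Ds, Disjoint G Di
  disjDDs : ∀ Di ∈ Ds, Disjoint D Di
  disjDsDs : ∀ Di ∈ Ds, ∀ Dj ∈ Ds, Di ≠ Dj → Disjoint Di Dj
  interGD : CircleInter G D
  interGDs : ∀ Di ∈ Ds, CircleInter G Di
  interDDs : ∀ Di ∈ Ds, CircleInter D Di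
  interDsDs : ∀ Di ∈ Ds, ∀ Dj ∈ Ds, Di ≠ Dj → CircleInter Di Dj

/-- A minimal decomposition: the genus-surface has the fewest triangles. -/
def IsMinDecomp (K G D : Complex) (Ds : Finset Complex) : Prop :=
  IsDecomp K G D Ds ∧ ∀ G' D' Ds', IsDecomp K G' D' Ds' → G.card ≤ G'.card

open Finset

lemma mem_vertices {K : Complex} {x : ℕ} : x ∈ vertices K ↔ ∃ t ∈ K, x ∈ t := by
  simp [vertices]

lemma mem_edges {K : Complex} {e : Finset ℕ} :
    e ∈ edges K ↔ ∃ t ∈ K, e ⊆ t ∧ e.card = 2 := by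
  simp only [edges, Finset.mem_biUnion, Finset.mem_powersetCard]

lemma mem_linkV {K : Complex} {v x : ℕ} :
    x ∈ linkV K v ↔ x ≠ v ∧ ∃ t ∈ K, v ∈ t ∧ x ∈ t := by
  simp only [linkV, Finset.mem_erase, Finset.mem_biUnion, Finset.mem_filter, id]
  tauto

lemma tri_shape {t : Finset ℕ} {v : ℕ} (h3 : t.card = 3) (hv : v ∈ t) :
    ∃ a b : ℕ, a ≠ b ∧ v ≠ a ∧ v ≠ b ∧ t = {v, a, b} := by
  have h2 : (t.erase v).card = 2 := by rw [Finset.card_erase_of_mem hv, h3]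
  obtain ⟨a, b, hab, he⟩ := Finset.card_eq_two.1 h2
  have ha : a ∈ t.erase v := by rw [he]; simp
  have hb : b ∈ t.erase v := by rw [he]; simp
  refine ⟨a, b, hab, (Finset.ne_of_mem_erase ha).symm, (Finset.ne_of_mem_erase hb).symm, ?_⟩
  rw [← Finset.insert_erase hv, he]

/-- unique second triangle along an edge in a closed surface -/
lemma pair_of_filter {K : Complex} (hK : IsClosedSurface K)
    {e t : Finset ℕ} (he : e ∈ edges K) (ht : t ∈ K) (hsub : e ⊆ t) :
    ∃ s, s ∈ K ∧ e ⊆ s ∧ s ≠ t ∧ ∀ u ∈ K, e ⊆ u → u = t ∨ u = s := by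
  have h2 := hK.2 e he
  obtain ⟨x, y, hxy, hF⟩ := Finset.card_eq_two.1 h2
  have htF : t ∈ K.filter (fun u => e ⊆ u) := Finset.mem_filter.2 ⟨ht, hsub⟩
  rw [hF] at htF
  simp only [Finset.mem_insert, Finset.mem_singleton] at htF
  have key : ∀ u ∈ K, e ⊆ u → u = x ∨ u = y := by
    intro u hu hsu
    have : u ∈ K.filter (fun u => e ⊆ u) := Finset.mem_filter.2 ⟨hu, hsu⟩
    rw [hF] at this
    simpa using this
  rcases htF with rfl | rfl
  · have hyK : y ∈ K.filter (fun u => e ⊆ u) := by rw [hF]; simp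
    rw [Finset.mem_filter] at hyK
    exact ⟨y, hyK.1, hyK.2, hxy.symm, fun u hu hsu => key u hu hsu⟩
  · have hxK : x ∈ K.filter (fun u => e ⊆ u) := by rw [hF]; simp
    rw [Finset.mem_filter] at hxK
    exact ⟨x, hxK.1, hxK.2, hxy, fun u hu hsu => (key u hu hsu).symm⟩

/-- The structure of the star of a 3-valent vertex. -/
structure ConeData (K : Complex) (v a b c : ℕ) : Prop where
  hab : a ≠ b
  hac : a ≠ c
  hbc : b ≠ c
  hva : v ≠ a
  hvb : v ≠ b
  hvc : v ≠ c
  hS : K.filter (fun t => v ∈ t) = {{v,a,b},{v,a,c},{v,b,c}}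

section Cone
variable {K : Complex} {v a b c : ℕ}

/-- wlog-core of the cone structure lemma -/
lemma cone_aux (hK : IsClosedSurface K) {t₁ t₂ t₃ : Finset ℕ}
    (h12 : t₁ ≠ t₂) (h13 : t₁ ≠ t₃) (h23 : t₂ ≠ t₃)
    (hS : K.filter (fun t => v ∈ t) = {t₁, t₂, t₃})
    {a b : ℕ} (hab : a ≠ b) (hva : v ≠ a) (hvb : v ≠ b)
    (ht₁ : t₁ = {v, a, b}) (ha2 : a ∈ t₂) :
    ∃ c, ConeData K v a b c := by
  have hmem : ∀ t, t ∈ K ∧ v ∈ t ↔ t = t₁ ∨ t = t₂ ∨ t = t₃ := by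
    intro t
    constructor
    · intro ht
      have : t ∈ K.filter (fun t => v ∈ t) := Finset.mem_filter.2 ht
      rw [hS] at this; simpa using this
    · intro ht
      have : t ∈ K.filter (fun t => v ∈ t) := by rw [hS]; simpa using ht
      exact Finset.mem_filter.1 this
  have ht₂K : t₂ ∈ K ∧ v ∈ t₂ := (hmem t₂).2 (by tauto)
  have ht₃K : t₃ ∈ K ∧ v ∈ t₃ := (hmem t₃).2 (by tauto)
  have ht₁K : t₁ ∈ K ∧ v ∈ t₁ := (hmem t₁).2 (by tauto)
  -- shape of t₂
  have h2c : ((t₂.erase v).erase a).card = 1 := by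
    rw [Finset.card_erase_of_mem (Finset.mem_erase.2 ⟨fun h => hva h.symm, ha2⟩),
        Finset.card_erase_of_mem ht₂K.2, hK.1.card3 t₂ ht₂K.1]
  obtain ⟨c, hc⟩ := Finset.card_eq_one.1 h2c
  have hca : c ≠ a := by
    have : c ∈ (t₂.erase v).erase a := by rw [hc]; simp
    exact Finset.ne_of_mem_erase this
  have hcv : c ≠ v := by
    have : c ∈ (t₂.erase v).erase a := by rw [hc]; simp
    exact Finset.ne_of_mem_erase (Finset.mem_of_mem_erase this)
  have ht₂ : t₂ = {v, a, c} := by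
    have e1 : t₂.erase v = {a, c} := by
      rw [← Finset.insert_erase (Finset.mem_erase.2 ⟨fun h => hva h.symm, ha2⟩), hc]
    rw [← Finset.insert_erase ht₂K.2, e1]
  have hcb : c ≠ b := by
    rintro rfl
    exact h12 (ht₁.trans ht₂.symm)
  -- b must be in t₃
  have hb3 : b ∈ t₃ := by
    have hedge : ({v, b} : Finset ℕ) ∈ edges K := by
      rw [mem_edges]
      exact ⟨t₁, ht₁K.1, by rw [ht₁]; intro x hx; simp at hx ⊢; tauto,
        Finset.card_pair hvb⟩
    obtain ⟨s, hsK, hsub, hsne, _⟩ := pair_of_filter hK hedge ht₁K.1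
      (by rw [ht₁]; intro x hx; simp at hx ⊢; tauto)
    have hvs : v ∈ s := hsub (by simp)
    have hbs : b ∈ s := hsub (by simp)
    rcases (hmem s).1 ⟨hsK, hvs⟩ with rfl | rfl | rfl
    · exact absurd rfl hsne
    · rw [ht₂] at hbs; simp at hbs; tauto
    · exact hbs
  -- shape of t₃ and c ∈ t₃
  have hc3 : c ∈ t₃ := by
    have hedge : ({v, c} : Finset ℕ) ∈ edges K := by
      rw [mem_edges]
      exact ⟨t₂, ht₂K.1, by rw [ht₂]; intro x hx; simp at hx ⊢; tauto,
        Finset.card_pair hcv.symm⟩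
    obtain ⟨s, hsK, hsub, hsne, _⟩ := pair_of_filter hK hedge ht₂K.1
      (by rw [ht₂]; intro x hx; simp at hx ⊢; tauto)
    have hvs : v ∈ s := hsub (by simp)
    have hcs : c ∈ s := hsub (by simp)
    rcases (hmem s).1 ⟨hsK, hvs⟩ with rfl | rfl | rfl
    · rw [ht₁] at hcs; simp at hcs; tauto
    · exact absurd rfl hsne
    · exact hcs
  have ht₃ : t₃ = {v, b, c} := by
    have h3 : t₃.card = 3 := hK.1.card3 t₃ ht₃K.1
    have hsub : ({v, b, c} : Finset ℕ) ⊆ t₃ := by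
      intro x hx; simp at hx
      rcases hx with rfl | rfl | rfl
      exacts [ht₃K.2, hb3, hc3]
    have hcard : ({v, b, c} : Finset ℕ).card = 3 := by
      rw [Finset.card_insert_of_notMem (by
            simp only [Finset.mem_insert, Finset.mem_singleton]
            rintro (rfl | rfl); exacts [hvb rfl, hcv rfl]),
          Finset.card_pair (fun h => hcb h.symm)]
    exact (Finset.eq_of_subset_of_card_le hsub (by omega)).symm
  refine ⟨c, hab, fun h => hca h.symm, fun h => hcb h.symm, hva, hvb, fun h => hcv h.symm,
    by rw [hS, ht₁, ht₂, ht₃]⟩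

end Cone

lemma filter_eq_iff_mem {K : Complex} {p : Finset ℕ → Prop} [DecidablePred p]
    {L : Finset (Finset ℕ)} (h : K.filter p = L) : ∀ t, (t ∈ K ∧ p t) ↔ t ∈ L := by
  intro t; rw [← h, Finset.mem_filter]

lemma cone_structure {K : Complex} {v : ℕ} (hK : IsClosedSurface K) (hv3 : valence K v = 3) :
    ∃ a b c, ConeData K v a b c := by
  obtain ⟨t₁, t₂, t₃, h12, h13, h23, hS⟩ := Finset.card_eq_three.1 hv3
  have hmem := filter_eq_iff_mem hS
  have ht₁K : t₁ ∈ K ∧ v ∈ t₁ := (hmem t₁).2 (by simp)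
  obtain ⟨a, b, hab, hva, hvb, ht₁⟩ := tri_shape (hK.1.card3 t₁ ht₁K.1) ht₁K.2
  have hedge : ({v, a} : Finset ℕ) ∈ edges K := by
    rw [mem_edges]
    exact ⟨t₁, ht₁K.1, by rw [ht₁]; intro x hx; simp at hx ⊢; tauto, Finset.card_pair hva⟩
  obtain ⟨s, hsK, hsub, hsne, _⟩ := pair_of_filter hK hedge ht₁K.1
    (by rw [ht₁]; intro x hx; simp at hx ⊢; tauto)
  have hvs : v ∈ s := hsub (by simp)
  have has : a ∈ s := hsub (by simp)
  have hs3 := (hmem s).1 ⟨hsK, hvs⟩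
  simp only [Finset.mem_insert, Finset.mem_singleton] at hs3
  rcases hs3 with rfl | rfl | rfl
  · exact absurd rfl hsne
  · obtain ⟨c, hc⟩ := cone_aux hK h12 h13 h23 hS hab hva hvb ht₁ has
    exact ⟨a, b, c, hc⟩
  · have hS' : K.filter (fun t => v ∈ t) = {t₁, s, t₂} := by
      rw [hS]; ext u; simp; tauto
    obtain ⟨c, hc⟩ := cone_aux hK h13 h12 (Ne.symm h23) hS' hab hva hvb ht₁ has
    exact ⟨a, b, c, hc⟩

namespace ConeData

variable {K : Complex} {v a b c : ℕ}

lemma mem₁ (h : ConeData K v a b c) : ({v,a,b} : Finset ℕ) ∈ K :=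
  ((filter_eq_iff_mem h.hS {v,a,b}).2 (by simp)).1

lemma mem₂ (h : ConeData K v a b c) : ({v,a,c} : Finset ℕ) ∈ K :=
  ((filter_eq_iff_mem h.hS {v,a,c}).2 (by simp)).1

lemma mem₃ (h : ConeData K v a b c) : ({v,b,c} : Finset ℕ) ∈ K :=
  ((filter_eq_iff_mem h.hS {v,b,c}).2 (by simp)).1

lemma mem_S_iff (h : ConeData K v a b c) {t : Finset ℕ} (htK : t ∈ K) (hvt : v ∈ t) :
    t = {v,a,b} ∨ t = {v,a,c} ∨ t = {v,b,c} := by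
  have := (filter_eq_iff_mem h.hS t).1 ⟨htK, hvt⟩
  simpa using this

lemma linkV_eq (h : ConeData K v a b c) : linkV K v = {a, b, c} := by
  ext x
  rw [mem_linkV]
  simp only [Finset.mem_insert, Finset.mem_singleton]
  constructor
  · rintro ⟨hxv, t, htK, hvt, hxt⟩
    rcases h.mem_S_iff htK hvt with rfl | rfl | rfl <;> simp at hxt <;> tauto
  · rintro (hx | hx | hx)
    · exact ⟨by rw [hx]; exact fun hh => h.hva hh.symm,
        ({v,a,b} : Finset ℕ), h.mem₁, by simp, by simp [hx]⟩
    · exact ⟨by rw [hx]; exact fun hh => h.hvb hh.symm,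
        ({v,a,b} : Finset ℕ), h.mem₁, by simp, by simp [hx]⟩
    · exact ⟨by rw [hx]; exact fun hh => h.hvc hh.symm,
        ({v,a,c} : Finset ℕ), h.mem₂, by simp, by simp [hx]⟩

lemma swapbc (h : ConeData K v a b c) : ConeData K v a c b :=
  ⟨h.hac, h.hab, h.hbc.symm, h.hva, h.hvc, h.hvb, by
    rw [h.hS, show ({v,c,b} : Finset ℕ) = {v,b,c} from by ext x; simp; tauto]
    ext t; simp; tauto⟩

lemma swapab (h : ConeData K v a b c) : ConeData K v b a c :=
  ⟨h.hab.symm, h.hbc, h.hac, h.hvb, h.hva, h.hvc, by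
    rw [h.hS, show ({v,b,a} : Finset ℕ) = {v,a,b} from by ext x; simp; tauto]
    ext t; simp; tauto⟩

lemma mem_invT (h : ConeData K v a b c) {t : Finset ℕ} :
    t ∈ invT K v ↔ t = {a,b,c} ∨ (t ∈ K ∧ v ∉ t) := by
  simp [invT, h.linkV_eq, Finset.mem_filter, Finset.mem_insert, and_comm]

lemma card_T (h : ConeData K v a b c) : ({a,b,c} : Finset ℕ).card = 3 :=
  Finset.card_eq_three.2 ⟨a, b, c, h.hab, h.hac, h.hbc, rfl⟩

end ConeData

lemma ConeData.notMem_T {K : Complex} {v a b c : ℕ} (h : ConeData K v a b c) :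
    v ∉ ({a,b,c} : Finset ℕ) := by
  simp only [Finset.mem_insert, Finset.mem_singleton]
  push_neg
  exact ⟨h.hva, h.hvb, h.hvc⟩

lemma edge_ab {K : Complex} {v a b c : ℕ} (hK : IsClosedSurface K) (h : ConeData K v a b c)
    (hl : ({a,b,c} : Finset ℕ) ∉ K) :
    ((invT K v).filter (fun t => ({a,b} : Finset ℕ) ⊆ t)).card = 2 := by
  have he : ({a,b} : Finset ℕ) ∈ edges K :=
    mem_edges.2 ⟨{v,a,b}, h.mem₁, by intro x hx; simp at hx ⊢; tauto, Finset.card_pair h.hab⟩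
  obtain ⟨s, hsK, hsub, hsne, huniq⟩ := pair_of_filter hK he h.mem₁
    (by intro x hx; simp at hx ⊢; tauto)
  have hvs : v ∉ s := by
    intro hvs
    rcases h.mem_S_iff hsK hvs with h3 | h3 | h3
    · exact hsne h3
    · have hb : b ∈ s := hsub (by simp)
      rw [h3] at hb; simp at hb
      rcases hb with h'|h'|h'
      exacts [h.hvb h'.symm, h.hab h'.symm, h.hbc h']
    · have ha : a ∈ s := hsub (by simp)
      rw [h3] at ha; simp at ha
      rcases ha with h'|h'|h'
      exacts [h.hva h'.symm, h.hab h', h.hac h']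
  have hfil : (invT K v).filter (fun t => ({a,b} : Finset ℕ) ⊆ t)
      = {({a,b,c} : Finset ℕ), s} := by
    ext u
    rw [Finset.mem_filter, h.mem_invT]
    simp only [Finset.mem_insert, Finset.mem_singleton]
    constructor
    · rintro ⟨hu | ⟨huK, hvu⟩, hsub'⟩
      · exact Or.inl hu
      · rcases huniq u huK hsub' with h3 | h3
        · rw [h3] at hvu; simp at hvu
        · exact Or.inr h3
    · rintro (rfl | rfl)
      · exact ⟨Or.inl rfl, by intro x hx; simp at hx ⊢; tauto⟩
      · exact ⟨Or.inr ⟨hsK, hvs⟩, hsub⟩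
  rw [hfil]
  exact Finset.card_pair (fun hTs => hl (by rw [hTs]; exact hsK))

lemma sub_T {K : Complex} {v a b c : ℕ} (h : ConeData K v a b c) {e : Finset ℕ}
    (hsub : e ⊆ ({a,b,c} : Finset ℕ)) (hcard : e.card = 2) :
    e = {a,b} ∨ e = {a,c} ∨ e = {b,c} := by
  obtain ⟨x, y, hxy, rfl⟩ := Finset.card_eq_two.1 hcard
  have hx := hsub (by simp : x ∈ ({x,y} : Finset ℕ))
  have hy := hsub (by simp : y ∈ ({x,y} : Finset ℕ))
  simp only [Finset.mem_insert, Finset.mem_singleton] at hx hy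
  rcases hx with h1|h1|h1 <;> rcases hy with h2|h2|h2 <;>
    first
    | exact absurd (h1.trans h2.symm) hxy
    | (rw [h1, h2]
       first
       | (left; rfl) | (left; exact Finset.pair_comm _ _)
       | (right; left; rfl) | (right; left; exact Finset.pair_comm _ _)
       | (right; right; rfl) | (right; right; exact Finset.pair_comm _ _))

lemma invT_edge_two {K : Complex} {v a b c : ℕ} (hK : IsClosedSurface K)
    (h : ConeData K v a b c) (hl : ({a,b,c} : Finset ℕ) ∉ K) :
    ∀ e ∈ edges (invT K v), ((invT K v).filter (fun t => e ⊆ t)).card = 2 := by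
  intro e he
  obtain ⟨u, hu, hsubu, hcard⟩ := mem_edges.1 he
  by_cases hT : e ⊆ ({a,b,c} : Finset ℕ)
  · rcases sub_T h hT hcard with rfl | rfl | rfl
    · exact edge_ab hK h hl
    · exact edge_ab hK h.swapbc
        (by rwa [show ({a,c,b} : Finset ℕ) = {a,b,c} from by ext x; simp; tauto])
    · exact edge_ab hK h.swapab.swapbc
        (by rwa [show ({b,c,a} : Finset ℕ) = {a,b,c} from by ext x; simp; tauto])
  · have huK : u ∈ K ∧ v ∉ u := by
      rcases h.mem_invT.1 hu with h3 | h3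
      · exact absurd (h3 ▸ hsubu) hT
      · exact h3
    have hvE : v ∉ e := fun hv => huK.2 (hsubu hv)
    have heK : e ∈ edges K := mem_edges.2 ⟨u, huK.1, hsubu, hcard⟩
    have hfil : (invT K v).filter (fun t => e ⊆ t) = K.filter (fun t => e ⊆ t) := by
      ext w
      rw [Finset.mem_filter, Finset.mem_filter, h.mem_invT]
      constructor
      · rintro ⟨rfl | hw, hsw⟩
        · exact absurd hsw hT
        · exact ⟨hw.1, hsw⟩
      · rintro ⟨hwK, hsw⟩
        refine ⟨Or.inr ⟨hwK, fun hvw => hT ?_⟩, hsw⟩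
        have hsube : e ⊆ w.erase v :=
          fun x hx => Finset.mem_erase.2 ⟨fun hxv => hvE (hxv ▸ hx), hsw hx⟩
        rcases h.mem_S_iff hwK hvw with h3|h3|h3 <;> rw [h3] at hsube <;>
          intro x hx <;> have hx' := hsube hx <;> simp at hx' ⊢ <;> tauto
    rw [hfil]
    exact hK.2 e heK

lemma chain_map {α : Type*} {r r' : α → α → Prop} (φ : α → α)
    (H : ∀ x y, r x y → Relation.ReflTransGen r' (φ x) (φ y)) :
    ∀ {x y}, Relation.ReflTransGen r x y → Relation.ReflTransGen r' (φ x) (φ y) := by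
  intro x y hxy
  induction hxy with
  | refl => exact .refl
  | tail _ h₂ ih => exact ih.trans (H _ _ h₂)

/-- the projection sending cone triangles to the new triangle -/
def coneMap (v : ℕ) (T : Finset ℕ) (t : Finset ℕ) : Finset ℕ := if v ∈ t then T else t

lemma adj_T {K : Complex} {v a b c : ℕ} (hK : IsClosedSurface K) (h : ConeData K v a b c)
    (hl : ({a,b,c} : Finset ℕ) ∉ K) {s s' : Finset ℕ} (hsK : s ∈ K) (hs'K : s' ∈ K)
    (hvs : v ∈ s) (hvs' : v ∉ s') (hint : (s ∩ s').card = 2) :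
    (({a,b,c} : Finset ℕ) ∩ s').card = 2 ∧ s ∩ s' ⊆ ({a,b,c} : Finset ℕ) := by
  have hsub1 : s ∩ s' ⊆ s.erase v := fun x hx => Finset.mem_erase.2
    ⟨fun hxv => hvs' (hxv ▸ (Finset.mem_inter.1 hx).2), (Finset.mem_inter.1 hx).1⟩
  have hse : (s.erase v).card = 2 := by rw [Finset.card_erase_of_mem hvs, hK.1.card3 s hsK]
  have heq : s ∩ s' = s.erase v := Finset.eq_of_subset_of_card_le hsub1 (by omega)
  have hsubT : s ∩ s' ⊆ ({a,b,c} : Finset ℕ) := by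
    rw [heq]
    rcases h.mem_S_iff hsK hvs with h3|h3|h3 <;> rw [h3] <;>
      intro x hx <;> simp at hx ⊢ <;> tauto
  have h2 : 2 ≤ (({a,b,c} : Finset ℕ) ∩ s').card := by
    have hss : s ∩ s' ⊆ ({a,b,c} : Finset ℕ) ∩ s' :=
      fun x hx => Finset.mem_inter.2 ⟨hsubT hx, (Finset.mem_inter.1 hx).2⟩
    calc 2 = (s ∩ s').card := hint.symm
    _ ≤ _ := Finset.card_le_card hss
  have h3 : (({a,b,c} : Finset ℕ) ∩ s').card ≤ 3 := by
    calc (({a,b,c} : Finset ℕ) ∩ s').card ≤ ({a,b,c} : Finset ℕ).card :=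
          Finset.card_le_card Finset.inter_subset_left
    _ = 3 := h.card_T
  have hne3 : (({a,b,c} : Finset ℕ) ∩ s').card ≠ 3 := by
    intro h3'
    have hTi : ({a,b,c} : Finset ℕ) ∩ s' = ({a,b,c} : Finset ℕ) :=
      Finset.eq_of_subset_of_card_le Finset.inter_subset_left (by rw [h.card_T, h3'])
    have hTs : ({a,b,c} : Finset ℕ) ⊆ s' := by rw [← hTi]; exact Finset.inter_subset_right
    have : ({a,b,c} : Finset ℕ) = s' :=
      Finset.eq_of_subset_of_card_le hTs (by rw [hK.1.card3 s' hs'K, h.card_T])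
    exact hl (this ▸ hs'K)
  exact ⟨by omega, hsubT⟩

lemma adjAt_step {K : Complex} {v a b c : ℕ} (hK : IsClosedSurface K) (h : ConeData K v a b c)
    (hl : ({a,b,c} : Finset ℕ) ∉ K) {w : ℕ} (hw : w ≠ v) {s s' : Finset ℕ}
    (ha : adjAt K w s s') :
    Relation.ReflTransGen (adjAt (invT K v) w)
      (coneMap v {a,b,c} s) (coneMap v {a,b,c} s') := by
  obtain ⟨hsK, hs'K, hws, hws', hint⟩ := ha
  by_cases h1 : v ∈ s <;> by_cases h2 : v ∈ s'
  · unfold coneMap; rw [if_pos h1, if_pos h2]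
  · obtain ⟨hc2, hsubT⟩ := adj_T hK h hl hsK hs'K h1 h2 hint
    have hwT : w ∈ ({a,b,c} : Finset ℕ) := hsubT (Finset.mem_inter.2 ⟨hws, hws'⟩)
    unfold coneMap; rw [if_pos h1, if_neg h2]
    exact Relation.ReflTransGen.single
      ⟨h.mem_invT.2 (Or.inl rfl), h.mem_invT.2 (Or.inr ⟨hs'K, h2⟩), hwT, hws', hc2⟩
  · obtain ⟨hc2, hsubT⟩ := adj_T hK h hl hs'K hsK h2 h1 (by rwa [Finset.inter_comm])
    have hwT : w ∈ ({a,b,c} : Finset ℕ) := hsubT (Finset.mem_inter.2 ⟨hws', hws⟩)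
    unfold coneMap; rw [if_neg h1, if_pos h2]
    exact Relation.ReflTransGen.single
      ⟨h.mem_invT.2 (Or.inr ⟨hsK, h1⟩), h.mem_invT.2 (Or.inl rfl), hws, hwT,
        by rw [Finset.inter_comm]; exact hc2⟩
  · unfold coneMap; rw [if_neg h1, if_neg h2]
    exact Relation.ReflTransGen.single
      ⟨h.mem_invT.2 (Or.inr ⟨hsK, h1⟩), h.mem_invT.2 (Or.inr ⟨hs'K, h2⟩), hws, hws', hint⟩

lemma adj_step {K : Complex} {v a b c : ℕ} (hK : IsClosedSurface K) (h : ConeData K v a b c)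
    (hl : ({a,b,c} : Finset ℕ) ∉ K) {s s' : Finset ℕ} (ha : adj K s s') :
    Relation.ReflTransGen (adj (invT K v))
      (coneMap v {a,b,c} s) (coneMap v {a,b,c} s') := by
  obtain ⟨hsK, hs'K, hint⟩ := ha
  by_cases h1 : v ∈ s <;> by_cases h2 : v ∈ s'
  · unfold coneMap; rw [if_pos h1, if_pos h2]
  · obtain ⟨hc2, _⟩ := adj_T hK h hl hsK hs'K h1 h2 hint
    unfold coneMap; rw [if_pos h1, if_neg h2]
    exact Relation.ReflTransGen.single
      ⟨h.mem_invT.2 (Or.inl rfl), h.mem_invT.2 (Or.inr ⟨hs'K, h2⟩), hc2⟩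
  · obtain ⟨hc2, _⟩ := adj_T hK h hl hs'K hsK h2 h1 (by rwa [Finset.inter_comm])
    unfold coneMap; rw [if_neg h1, if_pos h2]
    exact Relation.ReflTransGen.single
      ⟨h.mem_invT.2 (Or.inr ⟨hsK, h1⟩), h.mem_invT.2 (Or.inl rfl),
        by rw [Finset.inter_comm]; exact hc2⟩
  · unfold coneMap; rw [if_neg h1, if_neg h2]
    exact Relation.ReflTransGen.single
      ⟨h.mem_invT.2 (Or.inr ⟨hsK, h1⟩), h.mem_invT.2 (Or.inr ⟨hs'K, h2⟩), hint⟩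

lemma invT_closed {K : Complex} {v a b c : ℕ} (hK : IsClosedSurface K)
    (h : ConeData K v a b c) (hl : ({a,b,c} : Finset ℕ) ∉ K) :
    IsClosedSurface (invT K v) := by
  have hTmem : ({a,b,c} : Finset ℕ) ∈ invT K v := h.mem_invT.2 (Or.inl rfl)
  have hpre : ∀ t ∈ invT K v, ∀ w ∈ t, ∃ p, p ∈ K ∧ w ∈ p ∧ coneMap v {a,b,c} p = t := by
    intro t ht w hwt
    rcases h.mem_invT.1 ht with rfl | ⟨htK, hvt⟩
    · simp only [Finset.mem_insert, Finset.mem_singleton] at hwt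
      rcases hwt with h'|h'|h'
      · exact ⟨{v,a,b}, h.mem₁, by simp [h'], by unfold coneMap; rw [if_pos (by simp)]⟩
      · exact ⟨{v,a,b}, h.mem₁, by simp [h'], by unfold coneMap; rw [if_pos (by simp)]⟩
      · exact ⟨{v,a,c}, h.mem₂, by simp [h'], by unfold coneMap; rw [if_pos (by simp)]⟩
    · exact ⟨t, htK, hwt, by unfold coneMap; rw [if_neg hvt]⟩
  refine ⟨⟨⟨_, hTmem⟩, ?_, ?_, ?_, ?_⟩, invT_edge_two hK h hl⟩
  · intro t ht
    rcases h.mem_invT.1 ht with rfl | ⟨htK, _⟩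
    exacts [h.card_T, hK.1.card3 t htK]
  · exact fun e he => le_of_eq (invT_edge_two hK h hl e he)
  · intro w t₁ ht₁ t₂ ht₂ hw₁ hw₂
    have hwv : w ≠ v := by
      rintro rfl
      rcases h.mem_invT.1 ht₁ with h' | h'
      · exact h.notMem_T (h' ▸ hw₁)
      · exact h'.2 hw₁
    obtain ⟨p₁, hp₁K, hwp₁, hφ₁⟩ := hpre t₁ ht₁ w hw₁
    obtain ⟨p₂, hp₂K, hwp₂, hφ₂⟩ := hpre t₂ ht₂ w hw₂
    have hchain := hK.1.link_conn w p₁ hp₁K p₂ hp₂K hwp₁ hwp₂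
    have := chain_map (coneMap v {a,b,c})
      (fun x y hxy => adjAt_step hK h hl hwv hxy) hchain
    rwa [hφ₁, hφ₂] at this
  · intro t₁ ht₁ t₂ ht₂
    have hpre' : ∀ t ∈ invT K v, ∃ p, p ∈ K ∧ coneMap v {a,b,c} p = t := by
      intro t ht
      rcases h.mem_invT.1 ht with rfl | ⟨htK, hvt⟩
      · exact ⟨{v,a,b}, h.mem₁, by unfold coneMap; rw [if_pos (by simp)]⟩
      · exact ⟨t, htK, by unfold coneMap; rw [if_neg hvt]⟩
    obtain ⟨p₁, hp₁K, hφ₁⟩ := hpre' t₁ ht₁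
    obtain ⟨p₂, hp₂K, hφ₂⟩ := hpre' t₂ ht₂
    have hchain := hK.1.conn p₁ hp₁K p₂ hp₂K
    have := chain_map (coneMap v {a,b,c})
      (fun x y hxy => adj_step hK h hl hxy) hchain
    rwa [hφ₁, hφ₂] at this

lemma invT_card {K : Complex} {v a b c : ℕ} (hv3 : valence K v = 3)
    (h : ConeData K v a b c) (hl : ({a,b,c} : Finset ℕ) ∉ K) :
    (invT K v).card + 2 = K.card := by
  have h1 : (invT K v).card = (K.filter (fun t => v ∉ t)).card + 1 := by
    rw [invT, Finset.card_insert_of_notMem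
      (fun hmem => hl (h.linkV_eq ▸ (Finset.mem_filter.1 hmem).1))]
  have h2 := Finset.card_filter_add_card_filter_not (s := K) (p := fun t => v ∈ t)
  have h3 : (K.filter (fun t => v ∈ t)).card = 3 := hv3
  omega

/-- If a 3-valent vertex in the link of `v` exists, the link of `v` bounds. -/
lemma adj_blocked_aux {K : Complex} {v a b c : ℕ} (hK : IsClosedSurface K)
    (h : ConeData K v a b c) (ha3 : valence K a = 3) : ({a,b,c} : Finset ℕ) ∈ K := by
  have hm₁ : ({v,a,b} : Finset ℕ) ∈ K.filter (fun t => a ∈ t) :=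
    Finset.mem_filter.2 ⟨h.mem₁, by simp⟩
  have hm₂ : ({v,a,c} : Finset ℕ) ∈ K.filter (fun t => a ∈ t) :=
    Finset.mem_filter.2 ⟨h.mem₂, by simp⟩
  have h12 : ({v,a,b} : Finset ℕ) ≠ {v,a,c} := by
    intro heq
    have : b ∈ ({v,a,c} : Finset ℕ) := heq ▸ (by simp : b ∈ ({v,a,b} : Finset ℕ))
    simp at this
    rcases this with h'|h'|h'
    exacts [h.hvb h'.symm, h.hab h'.symm, h.hbc h']
  have ha3' : (K.filter (fun t => a ∈ t)).card = 3 := ha3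
  -- a third triangle around a
  have hsub : ¬ (K.filter (fun t => a ∈ t) ⊆ {({v,a,b} : Finset ℕ), ({v,a,c} : Finset ℕ)}) := by
    intro hsub
    have := Finset.card_le_card hsub
    rw [ha3'] at this
    have : ({({v,a,b} : Finset ℕ), ({v,a,c} : Finset ℕ)} : Finset (Finset ℕ)).card ≤ 2 :=
      Finset.card_insert_le _ _ |>.trans (by simp)
    omega
  obtain ⟨s, hsmem, hsnot⟩ := Finset.not_subset.1 hsub
  obtain ⟨hsK, has⟩ := Finset.mem_filter.1 hsmem
  simp only [Finset.mem_insert, Finset.mem_singleton] at hsnot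
  push_neg at hsnot
  obtain ⟨hs1, hs2⟩ := hsnot
  have hvs : v ∉ s := by
    intro hvs
    rcases h.mem_S_iff hsK hvs with h3|h3|h3
    · exact hs1 h3
    · exact hs2 h3
    · rw [h3] at has; simp at has
      rcases has with h'|h'|h'
      exacts [h.hva h'.symm, h.hab h', h.hac h']
  have hSa : K.filter (fun t => a ∈ t) = {({v,a,b} : Finset ℕ), ({v,a,c} : Finset ℕ), s} := by
    symm
    apply Finset.eq_of_subset_of_card_le
    · intro u hu
      simp only [Finset.mem_insert, Finset.mem_singleton] at hu
      rcases hu with rfl | rfl | rfl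
      exacts [hm₁, hm₂, hsmem]
    · rw [ha3', Finset.card_eq_three.2
        ⟨{v,a,b}, {v,a,c}, s, h12, fun h' => hs1 h'.symm, fun h' => hs2 h'.symm, rfl⟩]
  have hb : b ∈ s := by
    have he : ({a,b} : Finset ℕ) ∈ edges K :=
      mem_edges.2 ⟨{v,a,b}, h.mem₁, by intro x hx; simp at hx ⊢; tauto, Finset.card_pair h.hab⟩
    obtain ⟨u, huK, husub, hune, _⟩ := pair_of_filter hK he h.mem₁
      (by intro x hx; simp at hx ⊢; tauto)
    have hau : u ∈ K.filter (fun t => a ∈ t) := Finset.mem_filter.2 ⟨huK, husub (by simp)⟩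
    rw [hSa] at hau
    simp only [Finset.mem_insert, Finset.mem_singleton] at hau
    rcases hau with rfl | rfl | rfl
    · exact absurd rfl hune
    · have : b ∈ ({v,a,c} : Finset ℕ) := husub (by simp)
      simp at this
      rcases this with h'|h'|h'
      exacts [absurd h'.symm h.hvb, absurd h'.symm h.hab, absurd h' h.hbc]
    · exact husub (by simp)
  have hc : c ∈ s := by
    have he : ({a,c} : Finset ℕ) ∈ edges K :=
      mem_edges.2 ⟨{v,a,c}, h.mem₂, by intro x hx; simp at hx ⊢; tauto, Finset.card_pair h.hac⟩
    obtain ⟨u, huK, husub, hune, _⟩ := pair_of_filter hK he h.mem₂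
      (by intro x hx; simp at hx ⊢; tauto)
    have hau : u ∈ K.filter (fun t => a ∈ t) := Finset.mem_filter.2 ⟨huK, husub (by simp)⟩
    rw [hSa] at hau
    simp only [Finset.mem_insert, Finset.mem_singleton] at hau
    rcases hau with rfl | rfl | rfl
    · have : c ∈ ({v,a,b} : Finset ℕ) := husub (by simp)
      simp at this
      rcases this with h'|h'|h'
      exacts [absurd h'.symm h.hvc, absurd h'.symm h.hac, absurd h'.symm h.hbc]
    · exact absurd rfl hune
    · exact husub (by simp)
  have hTs : ({a,b,c} : Finset ℕ) ⊆ s := by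
    intro x hx; simp at hx
    rcases hx with rfl|rfl|rfl
    exacts [has, hb, hc]
  have : ({a,b,c} : Finset ℕ) = s :=
    Finset.eq_of_subset_of_card_le hTs (by rw [hK.1.card3 s hsK, h.card_T])
  exact this ▸ hsK

lemma adj_blocked {K : Complex} {v a b c : ℕ} (hK : IsClosedSurface K)
    (h : ConeData K v a b c) {w : ℕ} (hw : w ∈ linkV K v) (hw3 : valence K w = 3) :
    ({a,b,c} : Finset ℕ) ∈ K := by
  rw [h.linkV_eq] at hw
  simp only [Finset.mem_insert, Finset.mem_singleton] at hw
  rcases hw with rfl | rfl | rfl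
  · exact adj_blocked_aux hK h hw3
  · have := adj_blocked_aux hK h.swapab hw3
    rwa [show ({w,a,c} : Finset ℕ) = {a,w,c} from by ext x; simp; tauto] at this
  · have := adj_blocked_aux hK h.swapbc.swapab hw3
    rwa [show ({w,a,b} : Finset ℕ) = {a,b,w} from by ext x; simp; tauto] at this

lemma filter_invT {K : Complex} {v w : ℕ} (hvw : v ≠ w) (hwl : w ∉ linkV K v) :
    (invT K v).filter (fun t => w ∈ t) = K.filter (fun t => w ∈ t) := by
  ext t
  simp only [invT, Finset.filter_insert]
  rw [if_neg (by simpa using hwl)]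
  simp only [Finset.mem_filter, Finset.filter_filter]
  constructor
  · rintro ⟨htK, _, hwt⟩
    exact ⟨htK, hwt⟩
  · rintro ⟨htK, hwt⟩
    refine ⟨htK, fun hvt => ?_, hwt⟩
    exact hwl (mem_linkV.2 ⟨fun h => hvw h.symm, t, htK, hvt, hwt⟩)

lemma valence_invT {K : Complex} {v w : ℕ} (hvw : v ≠ w) (hwl : w ∉ linkV K v) :
    valence (invT K v) w = valence K w := by
  unfold valence; rw [filter_invT hvw hwl]

lemma linkV_invT {K : Complex} {v w : ℕ} (hvw : v ≠ w) (hwl : w ∉ linkV K v) :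
    linkV (invT K v) w = linkV K w := by
  unfold linkV; rw [filter_invT hvw hwl]

lemma invT_invT_comm {K : Complex} {v w : ℕ} (hvw : v ≠ w) (hwl : w ∉ linkV K v)
    (hvl : v ∉ linkV K w) :
    invT (invT K v) w = invT (invT K w) v := by
  have key : ∀ x y : ℕ, x ≠ y → (hyl : y ∉ linkV K x) →
      invT (invT K x) y = insert (linkV K y) (insert (linkV K x)
        (K.filter (fun t => x ∉ t ∧ y ∉ t))) := by
    intro x y hxy hyl
    rw [show invT (invT K x) y = insert (linkV (invT K x) y)
        ((invT K x).filter (fun t => y ∉ t)) from rfl, linkV_invT hxy hyl]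
    congr 1
    rw [invT, Finset.filter_insert, if_pos (by simpa using fun h => hyl h : y ∉ linkV K x),
      Finset.filter_filter]
  rw [key v w hvw hwl, key w v (Ne.symm hvw) hvl, Finset.insert_comm]
  congr 2
  exact Finset.filter_congr (fun t _ => and_comm)

lemma linkV_mem_symm {K : Complex} {v w : ℕ} (h : w ∈ linkV K v) : v ∈ linkV K w := by
  rw [mem_linkV] at h ⊢
  obtain ⟨hwv, t, htK, hvt, hwt⟩ := h
  exact ⟨fun h' => hwv h'.symm, t, htK, hwt, hvt⟩

/-- relabelling a complex -/
def mapC (f : ℕ → ℕ) (K : Complex) : Complex := K.image (Finset.image f)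

section MapC

variable {f : ℕ → ℕ} (hf : Function.Injective f) {K : Complex} {u : ℕ}

include hf

lemma mapC_filter_mem : (mapC f K).filter (fun t => f u ∈ t) =
    mapC f (K.filter (fun t => u ∈ t)) := by
  ext t
  simp only [mapC, Finset.mem_filter, Finset.mem_image]
  constructor
  · rintro ⟨⟨s, hs, rfl⟩, hmem⟩
    exact ⟨s, ⟨hs, (hf.mem_finset_image).1 hmem⟩, rfl⟩
  · rintro ⟨s, ⟨hs, hus⟩, rfl⟩
    exact ⟨⟨s, hs, rfl⟩, Finset.mem_image_of_mem f hus⟩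

lemma mapC_filter_notMem : (mapC f K).filter (fun t => f u ∉ t) =
    mapC f (K.filter (fun t => u ∉ t)) := by
  ext t
  simp only [mapC, Finset.mem_filter, Finset.mem_image]
  constructor
  · rintro ⟨⟨s, hs, rfl⟩, hmem⟩
    exact ⟨s, ⟨hs, fun hus => hmem (Finset.mem_image_of_mem f hus)⟩, rfl⟩
  · rintro ⟨s, ⟨hs, hus⟩, rfl⟩
    exact ⟨⟨s, hs, rfl⟩, fun hmem => hus ((hf.mem_finset_image).1 hmem)⟩

lemma valence_mapC : valence (mapC f K) (f u) = valence K u := by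
  unfold valence
  rw [mapC_filter_mem hf]
  exact Finset.card_image_of_injective _ (Finset.image_injective hf)

omit hf in
lemma biUnion_mapC : (mapC f K).biUnion id = (K.biUnion id).image f := by
  ext x
  simp only [Finset.mem_biUnion, Finset.mem_image, mapC, id]
  constructor
  · rintro ⟨t, ⟨s, hs, rfl⟩, hx⟩
    obtain ⟨y, hy, rfl⟩ := Finset.mem_image.1 hx
    exact ⟨y, ⟨s, hs, hy⟩, rfl⟩
  · rintro ⟨y, ⟨s, hs, hy⟩, rfl⟩
    exact ⟨s.image f, ⟨s, hs, rfl⟩, Finset.mem_image_of_mem f hy⟩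

lemma linkV_mapC : linkV (mapC f K) (f u) = (linkV K u).image f := by
  unfold linkV
  rw [mapC_filter_mem hf, biUnion_mapC, ← Finset.image_erase hf]

lemma invT_mapC : invT (mapC f K) (f u) = mapC f (invT K u) := by
  unfold invT
  rw [linkV_mapC hf, mapC_filter_notMem hf]
  simp only [mapC, Finset.image_insert]

lemma mem_mapC_iff {L : Finset ℕ} : L.image f ∈ mapC f K ↔ L ∈ K := by
  constructor
  · intro hmem
    obtain ⟨s, hs, heq⟩ := Finset.mem_image.1 hmem
    rwa [Finset.image_injective hf heq] at hs
  · exact fun h => Finset.mem_image_of_mem _ h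

lemma step_mapC {K K' : Complex} (h : InvTStep K K') : InvTStep (mapC f K) (mapC f K') := by
  obtain ⟨u, h3, hnl, rfl⟩ := h
  exact ⟨f u, by rw [valence_mapC hf]; exact h3,
    by rw [linkV_mapC hf]; exact fun hm => hnl ((mem_mapC_iff hf).1 hm),
    (invT_mapC hf).symm⟩

lemma rtg_mapC {K R : Complex} (h : Relation.ReflTransGen InvTStep K R) :
    Relation.ReflTransGen InvTStep (mapC f K) (mapC f R) := by
  induction h with
  | refl => exact .refl
  | tail _ h₂ ih => exact ih.tail (step_mapC hf h₂)

lemma nostep_mapC {R : Complex} (h : ∀ X, ¬ InvTStep R X) : ∀ X, ¬ InvTStep (mapC f R) X := by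
  rintro X ⟨u, h3, hnl, rfl⟩
  have hpos : (0:ℕ) < ((mapC f R).filter (fun t => u ∈ t)).card := by
    unfold valence at h3; omega
  obtain ⟨t, ht⟩ := Finset.card_pos.1 hpos
  obtain ⟨htm, hut⟩ := Finset.mem_filter.1 ht
  obtain ⟨s, hs, rfl⟩ := Finset.mem_image.1 htm
  obtain ⟨u₀, _, rfl⟩ := Finset.mem_image.1 hut
  exact h (invT R u₀) ⟨u₀, by rw [← valence_mapC hf]; exact h3,
    fun hm => hnl (by rw [linkV_mapC hf]; exact (mem_mapC_iff hf).2 hm), rfl⟩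

lemma rootof_mapC {R K : Complex} (h : IsRootOf R K) : IsRootOf (mapC f R) (mapC f K) :=
  ⟨rtg_mapC hf h.1, nostep_mapC hf h.2⟩

end MapC

lemma mapC_mapC {f g : ℕ → ℕ} {K : Complex} : mapC f (mapC g K) = mapC (f ∘ g) K := by
  unfold mapC
  rw [Finset.image_image]
  exact Finset.image_congr (fun t _ => Finset.image_image)

lemma mapC_swap_swap {v w : ℕ} {K : Complex} :
    mapC (Equiv.swap v w) (mapC (Equiv.swap v w) K) = K := by
  rw [mapC_mapC]
  have : (Equiv.swap v w) ∘ (Equiv.swap v w) = id := by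
    funext x; simp
  rw [this]
  unfold mapC
  rw [show (Finset.image (id : ℕ → ℕ)) = id from funext (fun s => Finset.image_id),
    Finset.image_id]

lemma vertices_mapC {f : ℕ → ℕ} {K : Complex} :
    vertices (mapC f K) = (vertices K).image f := by
  unfold vertices
  ext x
  simp only [Finset.mem_biUnion, Finset.mem_image, mapC, id]
  constructor
  · rintro ⟨t, ⟨s, hs, rfl⟩, hx⟩
    obtain ⟨y, hy, rfl⟩ := Finset.mem_image.1 hx
    exact ⟨y, ⟨s, hs, hy⟩, rfl⟩
  · rintro ⟨y, ⟨s, hs, hy⟩, rfl⟩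
    exact ⟨s.image f, ⟨s, hs, rfl⟩, Finset.mem_image_of_mem f hy⟩

lemma subset_vertices {K : Complex} {t : Finset ℕ} (ht : t ∈ K) : t ⊆ vertices K :=
  fun x hx => mem_vertices.2 ⟨t, ht, hx⟩

lemma iso_refl (K : Complex) : Iso K K :=
  ⟨id, Set.injOn_id _, by
    rw [show (Finset.image (id : ℕ → ℕ)) = id from funext (fun s => Finset.image_id),
      Finset.image_id]⟩

lemma iso_trans {K₁ K₂ K₃ : Complex} (h1 : Iso K₁ K₂) (h2 : Iso K₂ K₃) : Iso K₁ K₃ := by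
  obtain ⟨f, hf, rfl⟩ := h1
  obtain ⟨g, hg, rfl⟩ := h2
  refine ⟨g ∘ f, ?_, ?_⟩
  · apply Set.InjOn.comp hg hf
    intro x hx
    have hx' : x ∈ vertices K₁ := hx
    have : f x ∈ vertices (mapC f K₁) := by
      rw [vertices_mapC]
      exact Finset.mem_image_of_mem f hx'
    exact this
  · exact (mapC_mapC (f := g) (g := f) (K := K₁)).symm

lemma iso_symm {K₁ K₂ : Complex} (h : Iso K₁ K₂) : Iso K₂ K₁ := by
  obtain ⟨f, hf, rfl⟩ := h
  set g := Function.invFunOn f ↑(vertices K₁) with hg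
  have hleft : ∀ x ∈ vertices K₁, g (f x) = x := fun x hx => hf.leftInvOn_invFunOn hx
  refine ⟨g, ?_, ?_⟩
  · intro x hx y hy hxy
    have hx' : x ∈ vertices (mapC f K₁) := hx
    have hy' : y ∈ vertices (mapC f K₁) := hy
    rw [vertices_mapC] at hx' hy'
    obtain ⟨x₀, hx₀, rfl⟩ := Finset.mem_image.1 hx'
    obtain ⟨y₀, hy₀, rfl⟩ := Finset.mem_image.1 hy'
    rw [hleft x₀ hx₀, hleft y₀ hy₀] at hxy
    rw [hxy]
  · show (mapC f K₁).image (Finset.image g) = K₁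
    rw [mapC, Finset.image_image]
    have hid : ∀ t ∈ K₁, ((Finset.image g) ∘ (Finset.image f)) t = id t := by
      intro t ht
      show (t.image f).image g = t
      rw [Finset.image_image]
      calc t.image (g ∘ f) = t.image id :=
            Finset.image_congr (fun x hx => hleft x (subset_vertices ht hx))
      _ = t := Finset.image_id
    rw [Finset.image_congr hid, Finset.image_id]

lemma ConeData.cone_mem {K : Complex} {w a' b' c' : ℕ} (hw : ConeData K w a' b' c')
    {x y : ℕ} (hx : x ∈ ({a',b',c'} : Finset ℕ)) (hy : y ∈ ({a',b',c'} : Finset ℕ))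
    (hxy : x ≠ y) : ({w,x,y} : Finset ℕ) ∈ K := by
  simp only [Finset.mem_insert, Finset.mem_singleton] at hx hy
  rcases hx with h1|h1|h1 <;> rcases hy with h2|h2|h2 <;> rw [h1, h2] <;>
    first
    | exact absurd (h1.trans h2.symm) hxy
    | exact hw.mem₁
    | exact hw.mem₂
    | exact hw.mem₃
    | (rw [show ({w,b',a'} : Finset ℕ) = {w,a',b'} from by ext z; simp; try tauto]; exact hw.mem₁)
    | (rw [show ({w,c',a'} : Finset ℕ) = {w,a',c'} from by ext z; simp; try tauto]; exact hw.mem₂)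
    | (rw [show ({w,c',b'} : Finset ℕ) = {w,b',c'} from by ext z; simp; try tauto]; exact hw.mem₃)

lemma mapC_swap_fix {K : Complex} {v w a b c a' b' c' : ℕ}
    (hv : ConeData K v a b c) (hw : ConeData K w a' b' c')
    (hvw : v ≠ w) (hwT : w ∉ ({a,b,c} : Finset ℕ)) (hvT' : v ∉ ({a',b',c'} : Finset ℕ))
    (hllT : ({a',b',c'} : Finset ℕ) = ({a,b,c} : Finset ℕ)) :
    mapC (Equiv.swap v w) K = K := by
  set σ : ℕ → ℕ := ⇑(Equiv.swap v w) with hσdef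
  have hσv : σ v = w := Equiv.swap_apply_left v w
  have hσw : σ w = v := Equiv.swap_apply_right v w
  have hσfix : ∀ x, x ≠ v → x ≠ w → σ x = x := fun x h1 h2 =>
    Equiv.swap_apply_of_ne_of_ne h1 h2
  simp only [Finset.mem_insert, Finset.mem_singleton] at hwT hvT'
  push_neg at hwT hvT'
  have key : ∀ t ∈ K, t.image σ ∈ K := by
    intro t ht
    by_cases hvt : v ∈ t
    · have himg : ∀ x y : ℕ, x ≠ v → x ≠ w → y ≠ v → y ≠ w →
          ({v,x,y} : Finset ℕ).image σ = {w,x,y} := by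
        intro x y hx1 hx2 hy1 hy2
        simp only [Finset.image_insert, Finset.image_singleton, hσv,
          hσfix x hx1 hx2, hσfix y hy1 hy2]
      rcases hv.mem_S_iff ht hvt with h3|h3|h3 <;> rw [h3]
      · rw [himg a b (Ne.symm hv.hva) (Ne.symm hwT.1) (Ne.symm hv.hvb) (Ne.symm hwT.2.1)]
        exact hw.cone_mem (by rw [hllT]; simp) (by rw [hllT]; simp) hv.hab
      · rw [himg a c (Ne.symm hv.hva) (Ne.symm hwT.1) (Ne.symm hv.hvc) (Ne.symm hwT.2.2)]
        exact hw.cone_mem (by rw [hllT]; simp) (by rw [hllT]; simp) hv.hac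
      · rw [himg b c (Ne.symm hv.hvb) (Ne.symm hwT.2.1) (Ne.symm hv.hvc) (Ne.symm hwT.2.2)]
        exact hw.cone_mem (by rw [hllT]; simp) (by rw [hllT]; simp) hv.hbc
    · by_cases hwt : w ∈ t
      · have himg : ∀ x y : ℕ, x ≠ v → x ≠ w → y ≠ v → y ≠ w →
            ({w,x,y} : Finset ℕ).image σ = {v,x,y} := by
          intro x y hx1 hx2 hy1 hy2
          simp only [Finset.image_insert, Finset.image_singleton, hσw,
            hσfix x hx1 hx2, hσfix y hy1 hy2]
        rcases hw.mem_S_iff ht hwt with h3|h3|h3 <;> rw [h3]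
        · rw [himg a' b' (Ne.symm hvT'.1) (Ne.symm hw.hva) (Ne.symm hvT'.2.1) (Ne.symm hw.hvb)]
          exact hv.cone_mem (by rw [← hllT]; simp) (by rw [← hllT]; simp) hw.hab
        · rw [himg a' c' (Ne.symm hvT'.1) (Ne.symm hw.hva) (Ne.symm hvT'.2.2) (Ne.symm hw.hvc)]
          exact hv.cone_mem (by rw [← hllT]; simp) (by rw [← hllT]; simp) hw.hac
        · rw [himg b' c' (Ne.symm hvT'.2.1) (Ne.symm hw.hvb) (Ne.symm hvT'.2.2) (Ne.symm hw.hvc)]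
          exact hv.cone_mem (by rw [← hllT]; simp) (by rw [← hllT]; simp) hw.hbc
      · have himg : t.image σ = t.image id := Finset.image_congr (fun x hx =>
          hσfix x (fun h' => hvt (h' ▸ hx)) (fun h' => hwt (h' ▸ hx)))
        rw [himg, Finset.image_id]
        exact ht
  have hsub : mapC σ K ⊆ K := by
    intro u hu
    obtain ⟨t, ht, rfl⟩ := Finset.mem_image.1 hu
    exact key t ht
  exact Finset.eq_of_subset_of_card_le hsub (le_of_eq
    (Finset.card_image_of_injective K (Finset.image_injective (Equiv.swap v w).injective)).symm)

lemma step_preserve {K K' : Complex} (hK : IsClosedSurface K) (h : InvTStep K K') :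
    IsClosedSurface K' ∧ K'.card + 2 = K.card := by
  obtain ⟨v, hv3, hlv, rfl⟩ := h
  obtain ⟨a, b, c, hcd⟩ := cone_structure hK hv3
  have hlv' : ({a,b,c} : Finset ℕ) ∉ K := hcd.linkV_eq ▸ hlv
  exact ⟨invT_closed hK hcd hlv', invT_card hv3 hcd hlv'⟩

/-- every closed triangulated surface has exactly one root
(up to simplicial isomorphism). -/
theorem root_exists_unique (K : Complex) (h : IsClosedSurface K) :
    ∃ R, IsRootOf R K ∧ ∀ R', IsRootOf R' K → Iso R' R := by
  suffices H : ∀ n (K : Complex), K.card ≤ n → IsClosedSurface K →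
      ∃ R, IsRootOf R K ∧ ∀ R', IsRootOf R' K → Iso R' R by
    exact H K.card K le_rfl h
  intro n
  induction n with
  | zero =>
    intro K hc hK
    obtain ⟨t, ht⟩ := hK.1.nonempty
    have := Finset.card_pos.2 ⟨t, ht⟩
    omega
  | succ n ih =>
    intro K hc hK
    by_cases hst : ∃ K₁, InvTStep K K₁
    · obtain ⟨K₁, hstep₁⟩ := hst
      obtain ⟨hC₁, hcard₁⟩ := step_preserve hK hstep₁
      obtain ⟨R₁, hR₁, hU₁⟩ := ih K₁ (by omega) hC₁
      refine ⟨R₁, ⟨Relation.ReflTransGen.head hstep₁ hR₁.1, hR₁.2⟩, ?_⟩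
      intro R' hR'
      rcases Relation.ReflTransGen.cases_head hR'.1 with hEq | ⟨K₂, hstep₂, hrest⟩
      · exact absurd (hEq ▸ hstep₁) (hR'.2 K₁)
      · have hRK₂ : IsRootOf R' K₂ := ⟨hrest, hR'.2⟩
        obtain ⟨hC₂, hcard₂⟩ := step_preserve hK hstep₂
        obtain ⟨R₂, hR₂, hU₂⟩ := ih K₂ (by omega) hC₂
        have hIR' : Iso R' R₂ := hU₂ R' hRK₂
        obtain ⟨v, hv3, hlv, hKv⟩ := hstep₁
        obtain ⟨w, hw3, hlw, hKw⟩ := hstep₂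
        obtain ⟨a, b, c, hcd⟩ := cone_structure hK hv3
        by_cases hvw : w = v
        · subst hvw
          rw [hKw, ← hKv] at hRK₂
          exact hU₁ R' hRK₂
        · have hwl : w ∉ linkV K v := fun hmem =>
            hlv (hcd.linkV_eq ▸ adj_blocked hK hcd hmem hw3)
          have hvl : v ∉ linkV K w := fun hmem => hwl (linkV_mem_symm hmem)
          by_cases hll : linkV K w = linkV K v
          · -- swap case
            obtain ⟨a', b', c', hcdw⟩ := cone_structure hK hw3
            have hllT : ({a',b',c'} : Finset ℕ) = ({a,b,c} : Finset ℕ) := by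
              rw [← hcdw.linkV_eq, ← hcd.linkV_eq]; exact hll
            have hwT : w ∉ ({a,b,c} : Finset ℕ) := hcd.linkV_eq ▸ hwl
            have hvT' : v ∉ ({a',b',c'} : Finset ℕ) := hcdw.linkV_eq ▸ hvl
            have hfix : mapC (Equiv.swap v w) K = K :=
              mapC_swap_fix hcd hcdw (fun h' => hvw h'.symm) hwT hvT' hllT
            have hσ : Function.Injective (⇑(Equiv.swap v w) : ℕ → ℕ) :=
              (Equiv.swap v w).injective
            have hK₂eq : K₂ = mapC (Equiv.swap v w) K₁ := by
              rw [hKw, hKv]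
              have h1 : invT K w = invT (mapC (Equiv.swap v w) K) ((Equiv.swap v w) v) := by
                rw [hfix, Equiv.swap_apply_left]
              rw [h1, invT_mapC hσ]
            have hroot : IsRootOf (mapC (Equiv.swap v w) R') K₁ := by
              have h2 := rootof_mapC hσ hRK₂
              rw [hK₂eq] at h2
              rwa [mapC_swap_swap] at h2
            have hIso1 : Iso (mapC (Equiv.swap v w) R') R₁ := hU₁ _ hroot
            have hIso0 : Iso R' (mapC (Equiv.swap v w) R') := ⟨Equiv.swap v w, hσ.injOn, rfl⟩
            exact iso_trans hIso0 hIso1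
          · -- commuting case
            have hstep₃ : InvTStep K₁ (invT K₁ w) := by
              refine ⟨w, ?_, ?_, rfl⟩
              · rw [hKv, valence_invT (fun h' => hvw h'.symm) hwl]; exact hw3
              · rw [hKv, linkV_invT (fun h' => hvw h'.symm) hwl]
                intro hmem
                rcases (hcd.mem_invT).1 hmem with heq | ⟨hmemK, _⟩
                · exact hll (by rw [heq, hcd.linkV_eq])
                · exact hlw hmemK
            have hstep₄ : InvTStep K₂ (invT K₂ v) := by
              obtain ⟨a', b', c', hcdw⟩ := cone_structure hK hw3
              refine ⟨v, ?_, ?_, rfl⟩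
              · rw [hKw, valence_invT hvw hvl]; exact hv3
              · rw [hKw, linkV_invT hvw hvl]
                intro hmem
                rcases (hcdw.mem_invT).1 hmem with heq | ⟨hmemK, _⟩
                · exact hll (hcdw.linkV_eq.trans heq.symm)
                · exact hlv hmemK
            have hjoin : invT K₁ w = invT K₂ v := by
              rw [hKv, hKw]
              exact invT_invT_comm (fun h' => hvw h'.symm) hwl hvl
            obtain ⟨hC₃, hcard₃⟩ := step_preserve hC₁ hstep₃
            obtain ⟨S, hS, _⟩ := ih (invT K₁ w) (by omega) hC₃
            have hSK₁ : IsRootOf S K₁ := ⟨Relation.ReflTransGen.head hstep₃ hS.1, hS.2⟩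
            have hSK₂ : IsRootOf S K₂ :=
              ⟨Relation.ReflTransGen.head hstep₄ (hjoin ▸ hS.1), hS.2⟩
            exact iso_trans hIR' (iso_trans (iso_symm (hU₂ S hSK₂)) (hU₁ S hSK₁))
    · push_neg at hst
      refine ⟨K, ⟨Relation.ReflTransGen.refl, fun X hX => hst X hX⟩, ?_⟩
      intro R' hR'
      rcases Relation.ReflTransGen.cases_head hR'.1 with hEq | ⟨c, hc, _⟩
      · rw [← hEq]; exact iso_refl K
      · exact absurd hc (hst c)


end Tri
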